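/- arXiv:2511.10406 — 3 statements merged into one kernel-verified Lean document; each statement's English description precedes it below -/
import Mathlib

section
/- Let W: R^d → R be convex, C¹, with minimum at 0 and W(0) = min W. Define M = sup_{|y|≤1}|∇W(y)| and suppose e^{−W} is a probability density. Set R_W = d·Γ((d+1)/2)·e^{|W(0)|+M}/π^{(d−1)/2}. Then for all |x| ≥ R_W + 1, ⟨x, ∇W(x)⟩ ≥ W(x) − W(0) ≥ (M/(1+R_W))·|x|. -/
open MeasureTheory RealInnerProductSpace

theorem grad_conv_ineq {d : ℕ} {W : EuclideanSpace ℝ (Fin d) → ℝ}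
    (hconv : ConvexOn ℝ Set.univ W) (hW : Differentiable ℝ W)
    (x y : EuclideanSpace ℝ (Fin d)) :
    W x + ⟪gradient W x, y - x⟫ ≤ W y := by
  have hinner : ⟪gradient W x, y - x⟫ = (fderiv ℝ W x) (y - x) := by
    simp [gradient, InnerProductSpace.toDual_symm_apply]
  set g : ℝ → ℝ := W ∘ (AffineMap.lineMap x y) with hg
  have hgconv : ConvexOn ℝ Set.univ g := by
    have := hconv.comp_affineMap (AffineMap.lineMap x y)
    simpa using this
  have hline : ∀ t : ℝ, (AffineMap.lineMap x y : ℝ →ᵃ[ℝ] _) t = t • (y - x) + x := by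
    intro t; rw [AffineMap.lineMap_apply, vsub_eq_sub, vadd_eq_add]
  have hderiv : HasDerivAt g ((fderiv ℝ W x) (y - x)) 0 := by
    have h1 : HasDerivAt (fun t : ℝ => t • (y - x) + x) (y - x) 0 := by
      simpa using ((hasDerivAt_id (0:ℝ)).smul_const (y - x)).add_const x
    have h2 := ((hW (((0:ℝ) • (y - x) + x))).hasFDerivAt.comp_hasDerivAt 0 h1)
    simp only [zero_smul, zero_add] at h2
    have : g = fun t => W (t • (y - x) + x) := by
      funext t; simp [hg, Function.comp, hline t]
    rw [this]; exact h2
  have hslope := hgconv.le_slope_of_hasDerivAt (Set.mem_univ (0:ℝ)) (Set.mem_univ 1)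
    one_pos hderiv
  rw [slope_def_field] at hslope
  have hg0 : g 0 = W x := by simp [hg, Function.comp]
  have hg1 : g 1 = W y := by simp [hg, Function.comp]
  rw [hg0, hg1] at hslope
  rw [hinner]
  linarith [hslope]

theorem slice_vol (n : ℕ) {r : ℝ} (hr : 0 ≤ r) :
    volume {w : Fin n → ℝ | ∑ i, (w i)^2 ≤ r^2} =
      ENNReal.ofReal r ^ n *
        ENNReal.ofReal (Real.sqrt Real.pi ^ n / Real.Gamma (n / 2 + 1)) := by
  cases n with
  | zero =>
      simp only [pow_zero, one_mul, Finset.univ_eq_empty, Finset.sum_empty]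
      have h1 : {w : Fin 0 → ℝ | (0:ℝ) ≤ r^2} = Set.univ := by
        ext w; simp [sq_nonneg]
      rw [h1]
      rw [show ((volume : Measure (Fin 0 → ℝ))) Set.univ = 1 by
        rw [volume_pi, Measure.pi_univ]; simp]
      simp [Real.Gamma_one]
  | succ m =>
      have e := (EuclideanSpace.volume_preserving_symm_measurableEquiv_toLp (Fin (m+1))).symm
      have hpre : (MeasurableEquiv.toLp 2 (Fin (m+1) → ℝ)).symm.symm ⁻¹'
          (Metric.closedBall (0 : EuclideanSpace ℝ (Fin (m+1))) r) =
          {w : Fin (m+1) → ℝ | ∑ i, (w i)^2 ≤ r^2} := by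
        ext w
        simp only [Set.mem_preimage, Metric.mem_closedBall, dist_zero_right, Set.mem_setOf_eq]
        rw [EuclideanSpace.norm_eq]
        have hco : ∀ i, ((MeasurableEquiv.toLp 2 (Fin (m+1) → ℝ)).symm.symm w) i = w i :=
          fun i => rfl
        simp_rw [hco, Real.norm_eq_abs, sq_abs]
        rw [Real.sqrt_le_iff]
        exact ⟨fun h => h.2, fun h => ⟨hr, h⟩⟩
      rw [← hpre, e.measure_preimage measurableSet_closedBall.nullMeasurableSet]
      rw [EuclideanSpace.volume_closedBall]
      simp [Fintype.card_fin]

theorem cone_vol {n : ℕ} (A : Set (EuclideanSpace ℝ (Fin (n+1)))) (hA : Convex ℝ A)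
    (hball : Metric.closedBall 0 1 ⊆ A) {z : EuclideanSpace ℝ (Fin (n+1))} (hz : z ∈ A)
    (hz1 : 1 ≤ ‖z‖) :
    ENNReal.ofReal (‖z‖ / (n+1)) *
      ENNReal.ofReal (Real.sqrt Real.pi ^ n / Real.Gamma (n / 2 + 1)) ≤ volume A := by
  set κ := ENNReal.ofReal (Real.sqrt Real.pi ^ n / Real.Gamma (n / 2 + 1)) with hκ
  set h := ‖z‖ with hh
  have hh0 : 0 < h := lt_of_lt_of_le one_pos hz1
  have hzne : z ≠ 0 := norm_ne_zero_iff.1 (ne_of_gt hh0)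
  set u := h⁻¹ • z with hu_def
  have hu : ‖u‖ = 1 := norm_smul_inv_norm hzne
  -- orthonormal basis with b 0 = u
  have horth : Orthonormal ℝ (Set.restrict {(0 : Fin (n+1))} (fun _ => u)) := by
    constructor
    · intro i; exact hu
    · intro i j hij
      exact absurd (Subtype.ext ((Set.mem_singleton_iff.1 i.2).trans
        (Set.mem_singleton_iff.1 j.2).symm)) hij
  obtain ⟨b, hb⟩ := horth.exists_orthonormalBasis_extension_of_card_eq
    (by simp [finrank_euclideanSpace_fin])
  have hb0 : b 0 = u := hb 0 rfl
  -- measure preserving map to ℝ × (Fin n → ℝ)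
  set e2 := (MeasurableEquiv.toLp 2 (Fin (n+1) → ℝ)).symm with he2
  set e3 := MeasurableEquiv.piFinSuccAbove (fun _ : Fin (n+1) => ℝ) 0 with he3
  set Φ : EuclideanSpace ℝ (Fin (n+1)) → ℝ × (Fin n → ℝ) := fun y => e3 (e2 (b.repr y)) with hΦdef
  have hΦ : MeasurePreserving Φ volume volume := by
    have h3 : MeasurePreserving e3 volume volume := by
      have := measurePreserving_piFinSuccAbove (fun _ : Fin (n+1) => (volume : Measure ℝ)) 0
      exact this
    exact (h3.comp (EuclideanSpace.volume_preserving_symm_measurableEquiv_toLp _)).comp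
      b.measurePreserving_repr
  set S : Set (ℝ × (Fin n → ℝ)) :=
    {p | p.1 ∈ Set.Ioc 0 h ∧ ∑ i, (p.2 i)^2 ≤ (1 - p.1/h)^2} with hSdef
  have hS : MeasurableSet S := by
    have h1 : MeasurableSet {p : ℝ × (Fin n → ℝ) | p.1 ∈ Set.Ioc 0 h} :=
      measurable_fst measurableSet_Ioc
    have h2 : MeasurableSet {p : ℝ × (Fin n → ℝ) | ∑ i, (p.2 i)^2 ≤ (1 - p.1/h)^2} :=
      measurableSet_le (by fun_prop) (by fun_prop)
    exact h1.inter h2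
  have hsub : Φ ⁻¹' S ⊆ A := by
    intro y hy
    set c := b.repr y with hc
    have hΦy : Φ y = (c 0, fun i => c (Fin.succAbove 0 i)) := rfl
    rw [Set.mem_preimage, hΦy] at hy
    obtain ⟨hy1, hy2⟩ := hy
    simp only [Set.mem_setOf_eq] at hy1 hy2
    set t := c 0 / h with ht_def
    have ht0 : 0 < t := div_pos hy1.1 hh0
    have ht1 : t ≤ 1 := (div_le_one hh0).2 hy1.2
    have htz : t • z = c 0 • u := by
      rw [hu_def, smul_smul, ← div_eq_mul_inv]
    have hrepr : b.repr (y - c 0 • u) = c - c 0 • EuclideanSpace.single 0 1 := by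
      rw [map_sub, _root_.map_smul, ← hb0, OrthonormalBasis.repr_self, ← hc]
    have hns : ‖y - c 0 • u‖ = Real.sqrt (∑ i, (c (Fin.succAbove 0 i))^2) := by
      rw [← b.repr.norm_map (y - c 0 • u), hrepr, EuclideanSpace.norm_eq]
      have happ : ∀ j, (c - c 0 • EuclideanSpace.single 0 1 :
          EuclideanSpace ℝ (Fin (n+1))) j = c j - c 0 * (if j = (0 : Fin (n+1)) then 1 else 0) := by
        intro j
        simp [EuclideanSpace.single_apply]
      congr 1
      simp_rw [happ, Real.norm_eq_abs, sq_abs]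
      rw [Fin.sum_univ_succAbove
        (fun j => (c j - c 0 * (if j = (0 : Fin (n+1)) then 1 else 0))^2) 0]
      have h0 : (c 0 - c 0 * (if (0:Fin (n+1)) = (0:Fin (n+1)) then 1 else 0))^2 = 0 := by simp
      rw [h0, zero_add]
      refine Finset.sum_congr rfl fun i _ => ?_
      simp [Fin.zero_succAbove, Fin.succ_ne_zero i]
    have hnorm : ‖y - c 0 • u‖ ≤ 1 - t := by
      rw [hns, Real.sqrt_le_iff]
      exact ⟨by linarith, hy2⟩
    rcases eq_or_lt_of_le ht1 with hteq | htlt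
    · have hy0 : ‖y - c 0 • u‖ ≤ 0 := by rw [← hteq] at hnorm; linarith
      have hyz : y = c 0 • u := by
        have := norm_le_zero_iff.1 hy0
        rwa [sub_eq_zero] at this
      have hc0 : c 0 = h := by
        rw [ht_def, div_eq_one_iff_eq (ne_of_gt hh0)] at hteq; exact hteq
      rw [hyz, hc0, hu_def, smul_smul, mul_inv_cancel₀ (ne_of_gt hh0), one_smul]
      exact hz
    · set v := (1-t)⁻¹ • (y - c 0 • u) with hv_def
      have hv : v ∈ Metric.closedBall (0 : EuclideanSpace ℝ (Fin (n+1))) 1 := by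
        rw [Metric.mem_closedBall, dist_zero_right, hv_def, norm_smul, Real.norm_eq_abs,
          abs_inv, abs_of_pos (by linarith : (0:ℝ) < 1 - t)]
        calc (1-t)⁻¹ * ‖y - c 0 • u‖ ≤ (1-t)⁻¹ * (1-t) :=
              mul_le_mul_of_nonneg_left hnorm (inv_nonneg.2 (by linarith))
          _ = 1 := inv_mul_cancel₀ (by linarith)
      have hcomb := hA hz (hball hv) (le_of_lt ht0) (by linarith : (0:ℝ) ≤ 1 - t) (by ring)
      have h1v : (1-t) • v = y - c 0 • u := by
        rw [hv_def, smul_smul, mul_inv_cancel₀ (by linarith : (1:ℝ)-t ≠ 0), one_smul]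
      have hyy : t • z + (1-t) • v = y := by rw [htz, h1v]; abel
      rwa [hyy] at hcomb
  have hκnn : 0 ≤ Real.sqrt Real.pi ^ n / Real.Gamma (n / 2 + 1) := by
    apply div_nonneg (by positivity)
    exact (Real.Gamma_pos_of_pos (by positivity)).le
  have hvolS : volume S = ENNReal.ofReal (h/(n+1)) * κ := by
    rw [Measure.volume_eq_prod, Measure.prod_apply hS]
    have hslice : ∀ s : ℝ, volume (Prod.mk s ⁻¹' S) =
        Set.indicator (Set.Ioc 0 h) (fun s => ENNReal.ofReal ((1 - s/h)^n) * κ) s := by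
      intro s
      by_cases hs : s ∈ Set.Ioc 0 h
      · have hpre : Prod.mk s ⁻¹' S = {w : Fin n → ℝ | ∑ i, (w i)^2 ≤ (1 - s/h)^2} := by
          ext w
          simp only [Set.mem_preimage, hSdef, Set.mem_setOf_eq]
          exact ⟨fun hp => hp.2, fun hp => ⟨hs, hp⟩⟩
        have hr : (0:ℝ) ≤ 1 - s/h := by
          have := hs.2; have h1 : s/h ≤ 1 := (div_le_one hh0).2 this
          linarith
        rw [hpre, Set.indicator_of_mem hs, slice_vol n hr, ENNReal.ofReal_pow hr]
      · have hpre : Prod.mk s ⁻¹' S = ∅ := by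
          ext w
          simp only [Set.mem_preimage, hSdef, Set.mem_setOf_eq, Set.mem_empty_iff_false,
            iff_false]
          exact fun hp => hs hp.1
        rw [hpre, measure_empty, Set.indicator_of_notMem hs]
    rw [lintegral_congr hslice, lintegral_indicator measurableSet_Ioc]
    rw [lintegral_mul_const _ (by fun_prop)]
    have hint : IntegrableOn (fun s => (1 - s/h)^n) (Set.Ioc 0 h) :=
      (Continuous.integrableOn_Ioc (by fun_prop))
    have hae : 0 ≤ᵐ[volume.restrict (Set.Ioc 0 h)] fun s => (1-s/h)^n := by
      rw [Filter.EventuallyLE, ae_restrict_iff' measurableSet_Ioc]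
      filter_upwards with s hs
      have h1 : s/h ≤ 1 := (div_le_one hh0).2 hs.2
      exact pow_nonneg (by linarith) n
    rw [← ofReal_integral_eq_lintegral_ofReal hint hae]
    congr 1
    have h1 : ∀ s : ℝ, (1 - s/h)^n = ((h - s)/h)^n := by
      intro s; congr 1; field_simp
    rw [← intervalIntegral.integral_of_le hh0.le]
    simp_rw [h1]
    rw [intervalIntegral.integral_comp_sub_left (fun t => (t/h)^n) h]
    rw [sub_self, sub_zero, intervalIntegral.integral_comp_div (fun t => t^n) (ne_of_gt hh0),
      zero_div, div_self (ne_of_gt hh0), integral_pow]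
    simp only [one_pow, smul_eq_mul]
    rw [zero_pow (by omega), sub_zero, mul_one_div]
  calc ENNReal.ofReal (h/(n+1)) * κ = volume S := hvolS.symm
    _ = volume (Φ ⁻¹' S) := (hΦ.measure_preimage hS.nullMeasurableSet).symm
    _ ≤ volume A := measure_mono hsub

theorem convex_drift_lower_bound {d : ℕ}
    (W : EuclideanSpace ℝ (Fin d) → ℝ)
    (hconv : ConvexOn ℝ Set.univ W) (hW : Differentiable ℝ W)
    (hmin : ∀ y, W 0 ≤ W y)
    (M : ℝ)
    (hM : M = sSup {r | ∃ y : EuclideanSpace ℝ (Fin d), ‖y‖ ≤ 1 ∧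
      r = ‖gradient W y‖})
    (hdens : ∫ x : EuclideanSpace ℝ (Fin d), Real.exp (-W x) = 1)
    (RW : ℝ)
    (hRW : RW = d * Real.Gamma ((d + 1) / 2) * Real.exp (|W 0| + M) /
      Real.pi ^ (((d : ℝ) - 1) / 2)) :
    ∀ x : EuclideanSpace ℝ (Fin d), RW + 1 ≤ ‖x‖ →
      W x - W 0 ≤ ⟪x, gradient W x⟫ ∧
      (M / (1 + RW)) * ‖x‖ ≤ W x - W 0 := by
  intro x hx
  have hgrad := fun a b => grad_conv_ineq hconv hW a b
  -- part 1
  have part1 : W x - W 0 ≤ ⟪x, gradient W x⟫ := by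
    have h1 := hgrad x 0
    rw [zero_sub, inner_neg_right] at h1
    rw [real_inner_comm]
    linarith [hmin x]
  refine ⟨part1, ?_⟩
  -- reduce to d = n + 1
  obtain ⟨n, rfl⟩ : ∃ n, d = n + 1 := by
    cases d with
    | zero =>
      exfalso
      have hx0 : ‖x‖ = 0 := by rw [EuclideanSpace.norm_eq]; simp
      have hRW0 : RW = 0 := by rw [hRW]; simp
      rw [hx0, hRW0] at hx; linarith
    | succ n => exact ⟨n, rfl⟩
  -- facts about M
  obtain ⟨zmax, hzmax, hCmax⟩ :=
    (isCompact_closedBall (0 : EuclideanSpace ℝ (Fin (n+1))) 2).exists_isMaxOn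
    ⟨0, by simp⟩ hW.continuous.continuousOn
  have hCmax' : ∀ y ∈ Metric.closedBall (0 : EuclideanSpace ℝ (Fin (n+1))) 2,
      W y ≤ W zmax := hCmax
  have hbdd : BddAbove {r | ∃ y : EuclideanSpace ℝ (Fin (n+1)), ‖y‖ ≤ 1 ∧
      r = ‖gradient W y‖} := by
    refine ⟨W zmax - W 0, ?_⟩
    rintro r ⟨y, hy1, rfl⟩
    by_cases hg : gradient W y = 0
    · rw [hg, norm_zero]
      linarith [hmin zmax]

    · have h1 := hgrad y (y + ‖gradient W y‖⁻¹ • gradient W y)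
      rw [add_sub_cancel_left, real_inner_smul_right, real_inner_self_eq_norm_sq] at h1
      have hgn : (0:ℝ) < ‖gradient W y‖ := norm_pos_iff.2 hg
      have h3 : ‖gradient W y‖⁻¹ * ‖gradient W y‖^2 = ‖gradient W y‖ := by
        rw [sq]; field_simp
      rw [h3] at h1
      have hnorm_le : ‖y + ‖gradient W y‖⁻¹ • gradient W y‖ ≤ 2 := by
        calc ‖y + ‖gradient W y‖⁻¹ • gradient W y‖
            ≤ ‖y‖ + ‖‖gradient W y‖⁻¹ • gradient W y‖ := norm_add_le _ _
          _ ≤ 1 + 1 := by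
              rw [norm_smul, Real.norm_eq_abs, abs_inv, abs_of_pos hgn,
                inv_mul_cancel₀ (ne_of_gt hgn)]
              linarith
          _ = 2 := by norm_num
      have h2 := hCmax' _ (Metric.mem_closedBall.2 (by simpa using hnorm_le))
      linarith [hmin y]
  have hMmem : ∀ y : EuclideanSpace ℝ (Fin (n+1)), ‖y‖ ≤ 1 → ‖gradient W y‖ ≤ M := by
    intro y hy
    rw [hM]
    exact le_csSup hbdd ⟨y, hy, rfl⟩
  have hM0 : 0 ≤ M := le_trans (norm_nonneg _) (hMmem 0 (by simp))
  -- the sublevel set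
  set A := {y : EuclideanSpace ℝ (Fin (n+1)) | W y ≤ W 0 + M} with hA_def
  have hAconv : Convex ℝ A := by
    have := hconv.convex_le (W 0 + M)
    simpa [Set.sep_univ] using this
  have hball : Metric.closedBall (0 : EuclideanSpace ℝ (Fin (n+1))) 1 ⊆ A := by
    intro y hy
    rw [Metric.mem_closedBall, dist_zero_right] at hy
    have h1 := hgrad y 0
    rw [zero_sub, inner_neg_right] at h1
    have h2 : ⟪gradient W y, y⟫ ≤ M := by
      calc ⟪gradient W y, y⟫ ≤ ‖gradient W y‖ * ‖y‖ := real_inner_le_norm _ _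
        _ ≤ M * 1 := mul_le_mul (hMmem y hy) hy (norm_nonneg y)
            (le_trans (norm_nonneg _) (hMmem y hy))
        _ = M := mul_one M
    simp only [hA_def, Set.mem_setOf_eq]
    linarith
  -- volume bound
  have hint : Integrable (fun y : EuclideanSpace ℝ (Fin (n+1)) => Real.exp (-W y)) := by
    by_contra hcon
    rw [integral_undef hcon] at hdens
    norm_num at hdens
  have hvol_le : volume A ≤ ENNReal.ofReal (Real.exp (|W 0| + M)) := by
    have key : volume A * ENNReal.ofReal (Real.exp (-(W 0 + M))) ≤ 1 := by
      calc volume A * ENNReal.ofReal (Real.exp (-(W 0 + M)))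
          = ∫⁻ _ in A, ENNReal.ofReal (Real.exp (-(W 0 + M))) := by
            rw [setLIntegral_const, mul_comm]
        _ ≤ ∫⁻ y in A, ENNReal.ofReal (Real.exp (-W y)) := by
            apply setLIntegral_mono
              (ENNReal.measurable_ofReal.comp
                (Real.continuous_exp.comp hW.continuous.neg).measurable)
            intro y hy
            apply ENNReal.ofReal_le_ofReal
            apply Real.exp_le_exp.2
            have h3 : W y ≤ W 0 + M := hy
            show -(W 0 + M) ≤ -W y
            linarith
        _ ≤ ∫⁻ y, ENNReal.ofReal (Real.exp (-W y)) := setLIntegral_le_lintegral _ _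
        _ = ENNReal.ofReal (∫ y, Real.exp (-W y)) :=
            (ofReal_integral_eq_lintegral_ofReal hint
              (Filter.Eventually.of_forall fun y => (Real.exp_pos _).le)).symm
        _ = 1 := by rw [hdens]; simp
    have hepos : (0:ℝ) < Real.exp (-(W 0 + M)) := Real.exp_pos _
    have h2 : volume A ≤ (ENNReal.ofReal (Real.exp (-(W 0 + M))))⁻¹ :=
      ENNReal.le_inv_iff_mul_le.2 key
    rw [← ENNReal.ofReal_inv_of_pos hepos, ← Real.exp_neg, neg_neg] at h2
    refine le_trans h2 (ENNReal.ofReal_le_ofReal (Real.exp_le_exp.2 ?_))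
    have := le_abs_self (W 0)
    linarith
  -- positivity of RW
  have hG : (0:ℝ) < Real.Gamma ((n:ℝ)/2 + 1) := Real.Gamma_pos_of_pos (by positivity)
  have hP : (0:ℝ) < Real.sqrt Real.pi ^ n := by positivity
  have hpi_eq : Real.pi ^ ((((n+1:ℕ):ℝ) - 1)/2) = Real.sqrt Real.pi ^ n := by
    rw [Real.sqrt_eq_rpow, ← Real.rpow_natCast (Real.pi ^ ((1:ℝ)/2)) n,
      ← Real.rpow_mul Real.pi_pos.le]
    congr 1; push_cast; ring
  have hgamma_eq : ((((n+1:ℕ):ℝ)) + 1) / 2 = (n:ℝ)/2 + 1 := by push_cast; ring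
  have hRW' : RW = (((n+1:ℕ)):ℝ) * Real.Gamma ((n:ℝ)/2 + 1) * Real.exp (|W 0| + M) /
      Real.sqrt Real.pi ^ n := by
    rw [hRW, hgamma_eq, hpi_eq]
  have hRW0 : 0 ≤ RW := by
    rw [hRW']
    positivity
  have hxpos : 0 < ‖x‖ := lt_of_lt_of_le (by linarith) hx
  set z := ((RW + 1)/‖x‖) • x with hz_def
  have hznorm : ‖z‖ = RW + 1 := by
    rw [hz_def, norm_smul, Real.norm_eq_abs, abs_of_pos (by positivity),
      div_mul_cancel₀ _ (ne_of_gt hxpos)]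
  have hznot : z ∉ A := by
    intro hzA
    have hcone := cone_vol A hAconv hball hzA (by rw [hznorm]; linarith)
    rw [hznorm] at hcone
    have hle := le_trans hcone hvol_le
    rw [← ENNReal.ofReal_mul (by positivity)] at hle
    have hreal : (RW + 1)/((n:ℝ)+1) * (Real.sqrt Real.pi ^ n / Real.Gamma ((n:ℝ)/2 + 1))
        ≤ Real.exp (|W 0| + M) :=
      (ENNReal.ofReal_le_ofReal_iff (Real.exp_pos _).le).1 hle
    have hKP : Real.exp (|W 0| + M) * (((n:ℝ)+1) * Real.Gamma ((n:ℝ)/2 + 1)) =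
        RW * Real.sqrt Real.pi ^ n := by
      rw [hRW']
      push_cast
      field_simp
    have hcontra : (RW + 1) * Real.sqrt Real.pi ^ n ≤ RW * Real.sqrt Real.pi ^ n := by
      calc (RW + 1) * Real.sqrt Real.pi ^ n
          = ((RW + 1)/((n:ℝ)+1) * (Real.sqrt Real.pi ^ n / Real.Gamma ((n:ℝ)/2 + 1))) *
            (((n:ℝ)+1) * Real.Gamma ((n:ℝ)/2 + 1)) := by field_simp
        _ ≤ Real.exp (|W 0| + M) * (((n:ℝ)+1) * Real.Gamma ((n:ℝ)/2 + 1)) :=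
            mul_le_mul_of_nonneg_right hreal (by positivity)
        _ = RW * Real.sqrt Real.pi ^ n := hKP
    nlinarith [hP]
  have hWz : W 0 + M < W z := not_le.1 hznot
  -- convexity combination
  set t := (RW + 1)/‖x‖ with ht_def
  have ht0 : 0 < t := by positivity
  have ht1 : t ≤ 1 := (div_le_one hxpos).2 hx
  have hcomb := hconv.2 (Set.mem_univ x) (Set.mem_univ (0 : EuclideanSpace ℝ (Fin (n+1))))
    ht0.le (by linarith : (0:ℝ) ≤ 1 - t) (by ring)
  have hzx : t • x + (1 - t) • (0 : EuclideanSpace ℝ (Fin (n+1))) = z := by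
    rw [hz_def]; simp
  rw [hzx] at hcomb
  simp only [smul_eq_mul] at hcomb
  have hMt : M ≤ t * (W x - W 0) := by nlinarith [hcomb, hWz]
  have hx' : t * ‖x‖ = RW + 1 := div_mul_cancel₀ _ (ne_of_gt hxpos)
  rw [div_mul_eq_mul_div, div_le_iff₀ (by linarith : (0:ℝ) < 1 + RW)]
  calc M * ‖x‖ ≤ t * (W x - W 0) * ‖x‖ := by
        apply mul_le_mul_of_nonneg_right hMt (norm_nonneg x)
    _ = (W x - W 0) * (t * ‖x‖) := by ring
    _ = (W x - W 0) * (RW + 1) := by rw [hx']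
    _ = (W x - W 0) * (1 + RW) := by ring
end

section
/- Let π = μ * N(0, τ²Id) where μ is supported in B(0,R), and ν = N(0, σ²Id), all on R^d. For λ ∈ (0,1), let p be the density of √λ·X + √(1−λ)·Z with X ~ π, Z ~ ν independent, and set α² = σ²(1−λ) + τ²λ. Then −(1/α²)·Id ≤ ∇² ln p(x) ≤ −((α² − λR²)/α⁴)·Id for all x. -/
set_option maxHeartbeats 1000000
set_option synthInstance.maxHeartbeats 400000
open MeasureTheory Real
noncomputable section
namespace GCHB
variable {d : ℕ}
local notation "E" => EuclideanSpace ℝ (Fin d)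

def innerB : EuclideanSpace ℝ (Fin d) →L[ℝ] EuclideanSpace ℝ (Fin d) →L[ℝ] ℝ := innerSL ℝ

@[simp] lemma innerB_apply (y z : E) : innerB y z = inner ℝ y z := rfl

lemma norm_innerB_apply (y : E) : ‖innerB y‖ = ‖y‖ := innerSL_apply_norm ℝ y

lemma norm_innerB_le : ‖(innerB (d := d))‖ ≤ 1 := norm_innerSL_le ℝ

def g (a s : ℝ) (x u : EuclideanSpace ℝ (Fin d)) : ℝ :=
  Real.exp (-‖x - s • u‖ ^ 2 / (2 * a))

def wv (a s : ℝ) (x u : EuclideanSpace ℝ (Fin d)) : EuclideanSpace ℝ (Fin d) :=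
  (-a⁻¹) • (x - s • u)

def D1 (a s : ℝ) (x u : E) : E →L[ℝ] ℝ := g a s x u • innerB (wv a s x u)

def D2 (a s : ℝ) (x u : E) : E →L[ℝ] E →L[ℝ] ℝ :=
  g a s x u • ((innerB (wv a s x u)).smulRight (innerB (wv a s x u)) - a⁻¹ • innerB)

lemma g_pos (a s : ℝ) (x u : E) : 0 < g a s x u := Real.exp_pos _

lemma g_le_one {a : ℝ} (ha : 0 < a) (s : ℝ) (x u : E) : g a s x u ≤ 1 := by
  rw [g, Real.exp_le_one_iff]
  apply div_nonpos_of_nonpos_of_nonneg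
  · rw [neg_nonpos]; positivity
  · positivity

lemma hasFDerivAt_g {a : ℝ} (ha : 0 < a) (s : ℝ) (x u : E) :
    HasFDerivAt (fun x => g a s x u) (D1 a s x u) x := by
  have h0 : HasFDerivAt (fun x : E => x - s • u) (ContinuousLinearMap.id ℝ E) x :=
    (hasFDerivAt_id x).sub_const _
  have h1 := h0.norm_sq
  have hfe : (fun x : E => -‖x - s • u‖ ^ 2 / (2 * a))
      = fun x : E => (-(2*a)⁻¹) * ‖x - s • u‖ ^ 2 := by
    funext y; rw [div_eq_mul_inv]; ring
  have h2 : HasFDerivAt (fun x : E => -‖x - s • u‖ ^ 2 / (2 * a))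
      ((-(2*a)⁻¹) • (2 • (innerSL ℝ (x - s • u)).comp (ContinuousLinearMap.id ℝ E))) x := by
    rw [hfe]; exact h1.const_mul _
  have h4 := h2.exp
  have hD : Real.exp (-‖x - s • u‖ ^ 2 / (2 * a)) •
      ((-(2*a)⁻¹) • (2 • (innerSL ℝ (x - s • u)).comp (ContinuousLinearMap.id ℝ E)))
      = D1 a s x u := by
    ext y
    simp only [D1, g, wv, ContinuousLinearMap.coe_smul', Pi.smul_apply, innerSL_apply_apply,
      innerB_apply, real_inner_smul_left, ContinuousLinearMap.comp_apply,
      ContinuousLinearMap.coe_id', id_eq, smul_eq_mul]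
    ring
  rw [← hD]
  exact h4

lemma hasFDerivAt_D1 {a : ℝ} (ha : 0 < a) (s : ℝ) (x u : E) :
    HasFDerivAt (fun x => D1 a s x u) (D2 a s x u) x := by
  have hw : HasFDerivAt (fun x : E => wv a s x u) ((-a⁻¹) • ContinuousLinearMap.id ℝ E) x :=
    ((hasFDerivAt_id x).sub_const (s • u)).const_smul (-a⁻¹)
  have hf : HasFDerivAt (fun x : E => innerB (wv a s x u))
      (innerB.comp ((-a⁻¹) • ContinuousLinearMap.id ℝ E)) x :=
    innerB.hasFDerivAt.comp x hw
  have hc := hasFDerivAt_g ha s x u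
  have h := hc.smul hf
  have hD : g a s x u • innerB.comp ((-a⁻¹) • ContinuousLinearMap.id ℝ E)
      + (D1 a s x u).smulRight (innerB (wv a s x u)) = D2 a s x u := by
    ext y z
    simp only [D1, D2, ContinuousLinearMap.add_apply, ContinuousLinearMap.coe_smul',
      Pi.smul_apply, ContinuousLinearMap.smul_apply, ContinuousLinearMap.sub_apply,
      ContinuousLinearMap.smulRight_apply, ContinuousLinearMap.comp_apply,
      ContinuousLinearMap.coe_id', id_eq, innerB_apply, real_inner_smul_left, smul_eq_mul]
    ring
  rw [← hD]
  exact h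

lemma norm_wv_le {a : ℝ} (ha : 0 < a) {s : ℝ} (hs : 0 ≤ s) (x u : E) :
    ‖wv a s x u‖ ≤ a⁻¹ * (‖x‖ + s * ‖u‖) := by
  rw [wv, norm_smul, Real.norm_eq_abs, abs_neg, abs_of_nonneg (inv_nonneg.mpr ha.le)]
  gcongr
  refine (norm_sub_le _ _).trans ?_
  gcongr
  rw [norm_smul, Real.norm_eq_abs, abs_of_nonneg hs]

lemma norm_D1_le {a : ℝ} (ha : 0 < a) {s : ℝ} (hs : 0 ≤ s) (x u : E) :
    ‖D1 a s x u‖ ≤ a⁻¹ * (‖x‖ + s * ‖u‖) := by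
  have hC : (0:ℝ) ≤ a⁻¹ * (‖x‖ + s * ‖u‖) := by
    apply mul_nonneg (inv_nonneg.mpr ha.le)
    have : 0 ≤ s * ‖u‖ := mul_nonneg hs (norm_nonneg _)
    positivity
  refine ContinuousLinearMap.opNorm_le_bound _ hC fun y => ?_
  have hval : D1 a s x u y = g a s x u * inner ℝ (wv a s x u) y := by
    simp [D1, ContinuousLinearMap.smul_apply]
  rw [hval, Real.norm_eq_abs, abs_mul, abs_of_pos (g_pos a s x u)]
  have h1 : |(inner ℝ (wv a s x u) y : ℝ)| ≤ ‖wv a s x u‖ * ‖y‖ := abs_real_inner_le_norm _ _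
  have h2 := norm_wv_le ha hs x u
  have h3 := g_le_one ha s x u
  have h4 := (g_pos a s x u).le
  have h5 : (0:ℝ) ≤ ‖y‖ := norm_nonneg _
  have h6 : (0:ℝ) ≤ ‖wv a s x u‖ := norm_nonneg _
  nlinarith [abs_nonneg (inner ℝ (wv a s x u) y : ℝ)]

lemma norm_D2_le {a : ℝ} (ha : 0 < a) {s : ℝ} (hs : 0 ≤ s) (x u : E) :
    ‖D2 a s x u‖ ≤ (a⁻¹ * (‖x‖ + s * ‖u‖)) ^ 2 + a⁻¹ := by
  have hC0 : (0:ℝ) ≤ a⁻¹ * (‖x‖ + s * ‖u‖) := by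
    apply mul_nonneg (inv_nonneg.mpr ha.le)
    have : 0 ≤ s * ‖u‖ := mul_nonneg hs (norm_nonneg _)
    positivity
  have hC : (0:ℝ) ≤ (a⁻¹ * (‖x‖ + s * ‖u‖)) ^ 2 + a⁻¹ := by positivity
  refine ContinuousLinearMap.opNorm_le_bound _ hC fun y => ?_
  refine ContinuousLinearMap.opNorm_le_bound _ (by positivity) fun z => ?_
  have hval : D2 a s x u y z
      = g a s x u * ((inner ℝ (wv a s x u) y : ℝ) * (inner ℝ (wv a s x u) z : ℝ)
        - a⁻¹ * (inner ℝ y z : ℝ)) := by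
    simp [D2, ContinuousLinearMap.smul_apply, ContinuousLinearMap.sub_apply,
      ContinuousLinearMap.smulRight_apply, smul_eq_mul, mul_sub]
  rw [hval, Real.norm_eq_abs, abs_mul, abs_of_pos (g_pos a s x u)]
  have h1 : |(inner ℝ (wv a s x u) y : ℝ)| ≤ ‖wv a s x u‖ * ‖y‖ := abs_real_inner_le_norm _ _
  have h1' : |(inner ℝ (wv a s x u) z : ℝ)| ≤ ‖wv a s x u‖ * ‖z‖ := abs_real_inner_le_norm _ _
  have h1'' : |(inner ℝ y z : ℝ)| ≤ ‖y‖ * ‖z‖ := abs_real_inner_le_norm _ _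
  have h2 := norm_wv_le ha hs x u
  have h3 := g_le_one ha s x u
  have h4 := (g_pos a s x u).le
  have h5 : (0:ℝ) ≤ ‖y‖ := norm_nonneg _
  have h5' : (0:ℝ) ≤ ‖z‖ := norm_nonneg _
  have h6 : (0:ℝ) ≤ ‖wv a s x u‖ := norm_nonneg _
  have ha' : (0:ℝ) ≤ a⁻¹ := inv_nonneg.mpr ha.le
  have habs : |(inner ℝ (wv a s x u) y : ℝ) * (inner ℝ (wv a s x u) z : ℝ)
      - a⁻¹ * (inner ℝ y z : ℝ)|
      ≤ (‖wv a s x u‖ ^ 2 + a⁻¹) * (‖y‖ * ‖z‖) := by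
    refine (abs_sub _ _).trans ?_
    rw [abs_mul, abs_mul, abs_of_nonneg ha']
    nlinarith [abs_nonneg (inner ℝ (wv a s x u) y : ℝ), abs_nonneg (inner ℝ (wv a s x u) z : ℝ)]
  calc g a s x u * |(inner ℝ (wv a s x u) y : ℝ) * (inner ℝ (wv a s x u) z : ℝ)
        - a⁻¹ * (inner ℝ y z : ℝ)|
      ≤ 1 * ((‖wv a s x u‖ ^ 2 + a⁻¹) * (‖y‖ * ‖z‖)) := by
        apply mul_le_mul h3 habs (abs_nonneg _) zero_le_one
    _ = (‖wv a s x u‖ ^ 2 + a⁻¹) * (‖y‖ * ‖z‖) := one_mul _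
    _ ≤ ((a⁻¹ * (‖x‖ + s * ‖u‖)) ^ 2 + a⁻¹) * (‖y‖ * ‖z‖) := by
        have : ‖wv a s x u‖ ^ 2 ≤ (a⁻¹ * (‖x‖ + s * ‖u‖)) ^ 2 := by nlinarith
        have hyz : (0:ℝ) ≤ ‖y‖ * ‖z‖ := mul_nonneg h5 h5'
        nlinarith
    _ = ((a⁻¹ * (‖x‖ + s * ‖u‖)) ^ 2 + a⁻¹) * ‖y‖ * ‖z‖ := by ring

lemma continuous_g (a s : ℝ) (x : E) : Continuous (fun u => g a s x u) := by
  unfold g; fun_prop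

lemma continuous_wv (a s : ℝ) (x : E) : Continuous (fun u => wv a s x u) := by
  unfold wv; fun_prop

lemma continuous_D1 (a s : ℝ) (x : E) : Continuous (fun u => D1 a s x u) := by
  unfold D1
  exact (continuous_g a s x).smul (innerB.continuous.comp (continuous_wv a s x))

instance instCSubD2 : ContinuousSub (E →L[ℝ] E →L[ℝ] ℝ) :=
  @IsTopologicalAddGroup.to_continuousSub _ _ _ (inferInstance : IsTopologicalAddGroup (E →L[ℝ] E →L[ℝ] ℝ))

instance instCENormD2 : ContinuousENorm (E →L[ℝ] E →L[ℝ] ℝ) :=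
  @SeminormedAddGroup.toContinuousENorm (E →L[ℝ] E →L[ℝ] ℝ) _

lemma continuous_D2 (a s : ℝ) (x : E) : Continuous (fun u => D2 a s x u) := by
  unfold D2
  refine (continuous_g a s x).smul ((show Continuous fun u => (innerB (wv a s x u)).smulRight (innerB (wv a s x u)) from ?_).sub continuous_const)
  have h1 : Continuous (fun u => innerB (wv a s x u)) :=
    innerB.continuous.comp (continuous_wv a s x)
  have h2 : IsBoundedBilinearMap ℝ fun p : (EuclideanSpace ℝ (Fin d) →L[ℝ] ℝ) ×
      (EuclideanSpace ℝ (Fin d) →L[ℝ] ℝ) => p.1.smulRight p.2 := isBoundedBilinearMap_smulRight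
  exact h2.continuous.comp (h1.prodMk h1)

section Meas

variable {μ : Measure (EuclideanSpace ℝ (Fin d))} [IsProbabilityMeasure μ]

lemma ae_norm_le {R : ℝ}
    (hsupp : μ (Metric.closedBall (0 : EuclideanSpace ℝ (Fin d)) R)ᶜ = 0) :
    ∀ᵐ u ∂μ, ‖u‖ ≤ R := by
  rw [Filter.eventually_iff, mem_ae_iff]
  refine measure_mono_null (fun u hu => ?_) hsupp
  simpa [Metric.mem_closedBall, dist_zero_right] using hu

def q (a s : ℝ) (μ : Measure (EuclideanSpace ℝ (Fin d))) (x : E) : ℝ := ∫ u, g a s x u ∂μ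

def Q1 (a s : ℝ) (μ : Measure (EuclideanSpace ℝ (Fin d))) (x : E) : E →L[ℝ] ℝ :=
  ∫ u, D1 a s x u ∂μ

def Q2 (a s : ℝ) (μ : Measure (EuclideanSpace ℝ (Fin d))) (x : E) : E →L[ℝ] E →L[ℝ] ℝ :=
  ∫ u, D2 a s x u ∂μ

variable {R a s : ℝ}

lemma int_g (ha : 0 < a) (s : ℝ) (x : E) : Integrable (fun u => g a s x u) μ := by
  refine (integrable_const (1:ℝ)).mono' ((continuous_g a s x).aestronglyMeasurable) ?_
  exact Filter.Eventually.of_forall fun u => by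
    rw [Real.norm_eq_abs, abs_of_pos (g_pos a s x u)]; exact g_le_one ha s x u

lemma int_D1 (ha : 0 < a) (hs : 0 ≤ s) (hR : 0 ≤ R)
    (hae : ∀ᵐ u ∂μ, ‖u‖ ≤ R) (x : E) : Integrable (fun u => D1 a s x u) μ := by
  refine (integrable_const (a⁻¹ * (‖x‖ + s * R))).mono'
    ((continuous_D1 a s x).aestronglyMeasurable) ?_
  filter_upwards [hae] with u hu
  have ha' := inv_nonneg.mpr ha.le
  refine (norm_D1_le ha hs x u).trans ?_
  gcongr

lemma int_D2 (ha : 0 < a) (hs : 0 ≤ s) (hR : 0 ≤ R)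
    (hae : ∀ᵐ u ∂μ, ‖u‖ ≤ R) (x : E) : Integrable (fun u => D2 a s x u) μ := by
  refine (integrable_const ((a⁻¹ * (‖x‖ + s * R)) ^ 2 + a⁻¹)).mono' (f := fun u => D2 a s x u)
    (by exact (continuous_D2 a s x).aestronglyMeasurable) ?_
  filter_upwards [hae] with u hu
  refine (norm_D2_le ha hs x u).trans ?_
  have ha' := inv_nonneg.mpr ha.le
  have h1 : a⁻¹ * (‖x‖ + s * ‖u‖) ≤ a⁻¹ * (‖x‖ + s * R) := by
    gcongr
  have h0 : (0:ℝ) ≤ a⁻¹ * (‖x‖ + s * ‖u‖) := by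
    apply mul_nonneg (inv_nonneg.mpr ha.le)
    have : 0 ≤ s * ‖u‖ := mul_nonneg hs (norm_nonneg _)
    positivity
  nlinarith

lemma norm_lt_of_ball {x₀ x : E} (hx : x ∈ Metric.ball x₀ 1) : ‖x‖ ≤ ‖x₀‖ + 1 := by
  have h := Metric.mem_ball.mp hx
  rw [dist_eq_norm] at h
  calc ‖x‖ = ‖x₀ + (x - x₀)‖ := by congr 1; abel
    _ ≤ ‖x₀‖ + ‖x - x₀‖ := norm_add_le _ _
    _ ≤ ‖x₀‖ + 1 := by linarith

lemma q_hasFDerivAt (ha : 0 < a) (hs : 0 ≤ s) (hR : 0 ≤ R)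
    (hae : ∀ᵐ u ∂μ, ‖u‖ ≤ R) (x₀ : E) :
    HasFDerivAt (q a s μ) (Q1 a s μ x₀) x₀ := by
  apply hasFDerivAt_integral_of_dominated_of_fderiv_le (𝕜 := ℝ)
    (F := fun x u => g a s x u) (F' := fun x u => D1 a s x u)
    (bound := fun _ => a⁻¹ * (‖x₀‖ + 1 + s * R)) (Metric.ball_mem_nhds x₀ one_pos)
  · exact Filter.Eventually.of_forall fun x => (continuous_g a s x).aestronglyMeasurable
  · exact int_g ha s x₀
  · exact (continuous_D1 a s x₀).aestronglyMeasurable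
  · filter_upwards [hae] with u hu x hx
    have ha' := inv_nonneg.mpr ha.le
    refine (norm_D1_le ha hs x u).trans ?_
    have := norm_lt_of_ball hx
    gcongr
  · exact integrable_const _
  · exact Filter.Eventually.of_forall fun u x _ => hasFDerivAt_g ha s x u

lemma Q1_hasFDerivAt (ha : 0 < a) (hs : 0 ≤ s) (hR : 0 ≤ R)
    (hae : ∀ᵐ u ∂μ, ‖u‖ ≤ R) (x₀ : E) :
    HasFDerivAt (Q1 a s μ) (Q2 a s μ x₀) x₀ := by
  apply hasFDerivAt_integral_of_dominated_of_fderiv_le (𝕜 := ℝ)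
    (F := fun x u => D1 a s x u) (F' := fun x u => D2 a s x u)
    (bound := fun _ => (a⁻¹ * (‖x₀‖ + 1 + s * R)) ^ 2 + a⁻¹) (Metric.ball_mem_nhds x₀ one_pos)
  · exact Filter.Eventually.of_forall fun x => (continuous_D1 a s x).aestronglyMeasurable
  · exact int_D1 ha hs hR hae x₀
  · exact (continuous_D2 a s x₀).aestronglyMeasurable
  · filter_upwards [hae] with u hu x hx
    refine (norm_D2_le ha hs x u).trans ?_
    have hb := norm_lt_of_ball hx
    have ha' := inv_nonneg.mpr ha.le
    have h1 : a⁻¹ * (‖x‖ + s * ‖u‖) ≤ a⁻¹ * (‖x₀‖ + 1 + s * R) := by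
      gcongr
    have h0 : (0:ℝ) ≤ a⁻¹ * (‖x‖ + s * ‖u‖) := by
      apply mul_nonneg (inv_nonneg.mpr ha.le)
      have : 0 ≤ s * ‖u‖ := mul_nonneg hs (norm_nonneg _)
      positivity
    nlinarith
  · exact integrable_const _
  · exact Filter.Eventually.of_forall fun u x _ => hasFDerivAt_D1 ha s x u

lemma q_pos (ha : 0 < a) (s : ℝ) (x : E) : 0 < q a s μ x := by
  rw [q, integral_pos_iff_support_of_nonneg_ae
    (Filter.Eventually.of_forall fun u => (g_pos a s x u).le) (int_g ha s x)]
  have hsup : (Function.support fun u => g a s x u) = Set.univ := by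
    ext u; simp [Function.mem_support, (g_pos a s x u).ne']
  rw [hsup, measure_univ]
  norm_num

theorem core (μ : Measure (EuclideanSpace ℝ (Fin d))) [IsProbabilityMeasure μ]
    {R a s : ℝ} (hR : 0 ≤ R) (ha : 0 < a) (hs : 0 ≤ s)
    (hsupp : μ (Metric.closedBall (0 : EuclideanSpace ℝ (Fin d)) R)ᶜ = 0) (x ξ : E) :
    -(1/a) * ‖ξ‖^2 ≤ iteratedFDeriv ℝ 2 (fun y => Real.log (q a s μ y)) x ![ξ, ξ] ∧
    iteratedFDeriv ℝ 2 (fun y => Real.log (q a s μ y)) x ![ξ, ξ]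
      ≤ -((a - s^2*R^2)/a^2) * ‖ξ‖^2 := by
  have hae : ∀ᵐ u ∂μ, ‖u‖ ≤ R := ae_norm_le hsupp
  have hqd : ∀ y, HasFDerivAt (q a s μ) (Q1 a s μ y) y :=
    fun y => q_hasFDerivAt ha hs hR hae y
  have hqp : ∀ y, 0 < q a s μ y := fun y => q_pos ha s y
  have hlog : ∀ y, HasFDerivAt (fun y => Real.log (q a s μ y))
      ((q a s μ y)⁻¹ • Q1 a s μ y) y := fun y => (hqd y).log (hqp y).ne'
  have hfd1 : (fderiv ℝ fun y => Real.log (q a s μ y))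
      = fun y => (q a s μ y)⁻¹ • Q1 a s μ y := funext fun y => (hlog y).fderiv
  have hinv : HasFDerivAt (fun y => (q a s μ y)⁻¹)
      ((-((q a s μ x)^2)⁻¹) • Q1 a s μ x) x :=
    (hasDerivAt_inv (hqp x).ne').comp_hasFDerivAt x (hqd x)
  have hM : HasFDerivAt (fun y => (q a s μ y)⁻¹ • Q1 a s μ y)
      ((q a s μ x)⁻¹ • Q2 a s μ x
        + ((-((q a s μ x)^2)⁻¹) • Q1 a s μ x).smulRight (Q1 a s μ x)) x :=
    hinv.smul (Q1_hasFDerivAt ha hs hR hae x)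
  have hT : iteratedFDeriv ℝ 2 (fun y => Real.log (q a s μ y)) x ![ξ, ξ]
      = (q a s μ x)⁻¹ * (Q2 a s μ x ξ ξ)
        + (-((q a s μ x)^2)⁻¹ * (Q1 a s μ x ξ)) * (Q1 a s μ x ξ) := by
    rw [iteratedFDeriv_two_apply, hfd1, hM.fderiv]
    simp [ContinuousLinearMap.add_apply, ContinuousLinearMap.smul_apply,
      ContinuousLinearMap.smulRight_apply, smul_eq_mul]
  -- notation
  set G : E → ℝ := fun u => g a s x u with hG
  set m : E → ℝ := fun u => (inner ℝ (wv a s x u) ξ : ℝ) with hm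
  set c₀ : ℝ := -a⁻¹ * (inner ℝ x ξ : ℝ) with hc₀
  set n : E → ℝ := fun u => (a⁻¹ * s) * (inner ℝ u ξ : ℝ) with hn
  have hmn : ∀ u, m u = c₀ + n u := by
    intro u
    simp only [hm, hn, hc₀, wv, real_inner_smul_left, inner_sub_left]
    ring
  have hGc : Continuous G := continuous_g a s x
  have hmc : Continuous m := by
    apply Continuous.inner (continuous_wv a s x) continuous_const
  have hnc : Continuous n := by
    apply Continuous.mul continuous_const
    exact Continuous.inner continuous_id continuous_const
  have ha' : (0:ℝ) ≤ a⁻¹ := inv_nonneg.mpr ha.le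
  have hGi : Integrable G μ := int_g ha s x
  -- generic integrability helper
  have key : ∀ (f : E → ℝ) (Cf : ℝ), Continuous f → (∀ᵐ u ∂μ, |f u| ≤ Cf) →
      Integrable (fun u => f u * G u) μ := by
    intro f Cf hfc hfb
    refine (integrable_const Cf).mono' ((hfc.mul hGc).aestronglyMeasurable) ?_
    filter_upwards [hfb] with u hu
    rw [Real.norm_eq_abs, abs_mul, abs_of_pos (g_pos a s x u)]
    calc |f u| * g a s x u ≤ Cf * 1 :=
          mul_le_mul hu (g_le_one ha s x u) (g_pos a s x u).le
            ((abs_nonneg _).trans hu)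
      _ = Cf := mul_one _
  have hmB : ∀ᵐ u ∂μ, |m u| ≤ a⁻¹ * (‖x‖ + s * R) * ‖ξ‖ := by
    filter_upwards [hae] with u hu
    calc |m u| ≤ ‖wv a s x u‖ * ‖ξ‖ := abs_real_inner_le_norm _ _
      _ ≤ (a⁻¹ * (‖x‖ + s * ‖u‖)) * ‖ξ‖ := by
          have := norm_wv_le ha hs x u; gcongr
      _ ≤ a⁻¹ * (‖x‖ + s * R) * ‖ξ‖ := by gcongr
  have hnB : ∀ᵐ u ∂μ, |n u| ≤ a⁻¹ * s * R * ‖ξ‖ := by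
    filter_upwards [hae] with u hu
    calc |n u| = (a⁻¹ * s) * |(inner ℝ u ξ : ℝ)| := by
          rw [hn, abs_mul, abs_of_nonneg (mul_nonneg ha' hs)]
      _ ≤ (a⁻¹ * s) * (‖u‖ * ‖ξ‖) := by
          have := abs_real_inner_le_norm u ξ
          exact mul_le_mul_of_nonneg_left this (mul_nonneg ha' hs)
      _ ≤ (a⁻¹ * s) * (R * ‖ξ‖) := by
          have h0 : 0 ≤ a⁻¹ * s := mul_nonneg ha' hs
          gcongr
      _ = a⁻¹ * s * R * ‖ξ‖ := by ring
  set Cm : ℝ := a⁻¹ * (‖x‖ + s * R) * ‖ξ‖ with hCm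
  set Bn : ℝ := a⁻¹ * s * R * ‖ξ‖ with hBn
  have hBn0 : 0 ≤ Bn := by
    have : 0 ≤ a⁻¹ * s := mul_nonneg ha' hs
    positivity
  have hmGi : Integrable (fun u => m u * G u) μ := key m Cm hmc hmB
  have hnGi : Integrable (fun u => n u * G u) μ := key n Bn hnc hnB
  have hmmGi : Integrable (fun u => m u * m u * G u) μ := by
    refine key (fun u => m u * m u) (Cm * Cm) (hmc.mul hmc) ?_
    filter_upwards [hmB] with u hu
    rw [abs_mul]
    exact mul_le_mul hu hu (abs_nonneg _) ((abs_nonneg _).trans hu)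
  have hnnGi : Integrable (fun u => n u * n u * G u) μ := by
    refine key (fun u => n u * n u) (Bn * Bn) (hnc.mul hnc) ?_
    filter_upwards [hnB] with u hu
    rw [abs_mul]
    exact mul_le_mul hu hu (abs_nonneg _) ((abs_nonneg _).trans hu)
  set I0 : ℝ := q a s μ x with hI0def
  set I1 : ℝ := ∫ u, m u * G u ∂μ with hI1def
  set I2 : ℝ := ∫ u, m u * m u * G u ∂μ with hI2def
  set J1 : ℝ := ∫ u, n u * G u ∂μ with hJ1def
  set J2 : ℝ := ∫ u, n u * n u * G u ∂μ with hJ2def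
  have hI0 : 0 < I0 := hqp x
  -- value of Q1 x ξ
  have hQ1ξ : Q1 a s μ x ξ = I1 := by
    rw [Q1, ContinuousLinearMap.integral_apply (int_D1 ha hs hR hae x), hI1def]
    congr 1; funext u
    simp only [D1, ContinuousLinearMap.smul_apply, innerB_apply, smul_eq_mul, hm, hG]
    ring
  have hQ2ξ : Q2 a s μ x ξ ξ = I2 - a⁻¹ * ‖ξ‖^2 * I0 := by
    have h1 : Q2 a s μ x ξ = ∫ u, D2 a s x u ξ ∂μ :=
      ContinuousLinearMap.integral_apply (int_D2 ha hs hR hae x) ξ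
    have h2 : Q2 a s μ x ξ ξ = ∫ u, D2 a s x u ξ ξ ∂μ := by
      rw [h1]
      exact ContinuousLinearMap.integral_apply
        ((int_D2 ha hs hR hae x).apply_continuousLinearMap ξ) ξ
    rw [h2]
    have h3 : ∀ u, D2 a s x u ξ ξ = m u * m u * G u - (a⁻¹ * ‖ξ‖^2) * G u := by
      intro u
      simp only [D2, ContinuousLinearMap.smul_apply, ContinuousLinearMap.sub_apply,
        ContinuousLinearMap.smulRight_apply, innerB_apply, smul_eq_mul, hm, hG]
      rw [real_inner_self_eq_norm_sq]
      ring
    rw [integral_congr_ae (Filter.Eventually.of_forall h3),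
      integral_sub hmmGi (hGi.const_mul _), integral_const_mul]
    rw [hI2def, hI0def, q]
  -- decompositions
  have hI1eq : I1 = c₀ * I0 + J1 := by
    rw [hI1def]
    have h : ∀ u, m u * G u = c₀ * G u + n u * G u := by
      intro u; rw [hmn u]; ring
    rw [integral_congr_ae (Filter.Eventually.of_forall h),
      integral_add (hGi.const_mul c₀) hnGi, integral_const_mul]
    rw [hI0def, q]
  have hI2eq : I2 = c₀^2 * I0 + 2*c₀*J1 + J2 := by
    rw [hI2def]
    have h : ∀ u, m u * m u * G u
        = (c₀^2 * G u + (2*c₀) * (n u * G u)) + n u * n u * G u := by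
      intro u; rw [hmn u]; ring
    have hA : Integrable (fun u => c₀^2 * G u + (2*c₀) * (n u * G u)) μ :=
      (hGi.const_mul _).add (hnGi.const_mul _)
    rw [integral_congr_ae (Filter.Eventually.of_forall h),
      integral_add hA hnnGi,
      integral_add (hGi.const_mul _) (hnGi.const_mul _),
      integral_const_mul, integral_const_mul]
    rw [hI0def, q]
  -- Cauchy-Schwarz
  have hCS : J1^2 ≤ J2 * I0 := by
    set t : ℝ := J1 / I0 with htdef
    have htI0 : t * I0 = J1 := div_mul_cancel₀ J1 hI0.ne'
    have htGi : Integrable (fun u => (n u - t)^2 * G u) μ := by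
      refine key (fun u => (n u - t)^2) ((Bn + |t|)^2) (by fun_prop) ?_
      filter_upwards [hnB] with u hu
      rw [abs_of_nonneg (sq_nonneg _)]
      have h1 : |n u - t| ≤ Bn + |t| := (abs_sub _ _).trans (by gcongr)
      have h2 := abs_le.mp h1
      exact sq_le_sq' h2.1 h2.2
    have hnonneg : 0 ≤ ∫ u, (n u - t)^2 * G u ∂μ :=
      integral_nonneg fun u => mul_nonneg (sq_nonneg _) (g_pos a s x u).le
    have hexp : ∫ u, (n u - t)^2 * G u ∂μ = J2 - 2*t*J1 + t^2*I0 := by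
      have h : ∀ u, (n u - t)^2 * G u
          = (n u * n u * G u - (2*t) * (n u * G u)) + t^2 * G u := by
        intro u; ring
      have hA : Integrable (fun u => n u * n u * G u - 2*t*(n u * G u)) μ :=
        hnnGi.sub (hnGi.const_mul _)
      rw [integral_congr_ae (Filter.Eventually.of_forall h),
        integral_add hA (hGi.const_mul _),
        integral_sub hnnGi (hnGi.const_mul _), integral_const_mul, integral_const_mul]
      rw [hJ2def, hJ1def, hI0def, q]
    rw [hexp] at hnonneg
    nlinarith [mul_nonneg hnonneg hI0.le, htI0]
  have hJ2le : J2 ≤ Bn^2 * I0 := by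
    have hmono : (fun u => n u * n u * G u) ≤ᵐ[μ] fun u => Bn^2 * G u := by
      filter_upwards [hnB] with u hu
      have h2 : n u * n u ≤ Bn^2 := by nlinarith [abs_nonneg (n u), neg_abs_le (n u), le_abs_self (n u)]
      exact mul_le_mul_of_nonneg_right h2 (g_pos a s x u).le
    calc J2 ≤ ∫ u, Bn^2 * G u ∂μ := integral_mono_ae hnnGi (hGi.const_mul _) hmono
      _ = Bn^2 * I0 := by rw [integral_const_mul, hI0def, q]
  -- final value
  have hTval : iteratedFDeriv ℝ 2 (fun y => Real.log (q a s μ y)) x ![ξ, ξ]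
      = -(a⁻¹ * ‖ξ‖^2) + (J2 * I0 - J1^2) / I0^2 := by
    rw [hT, hQ1ξ, hQ2ξ, hI1eq, hI2eq]
    field_simp
    ring
  have hquot0 : 0 ≤ (J2 * I0 - J1^2) / I0^2 :=
    div_nonneg (by linarith) (sq_nonneg _)
  have hquotle : (J2 * I0 - J1^2) / I0^2 ≤ Bn^2 := by
    rw [div_le_iff₀ (by positivity)]
    nlinarith [sq_nonneg J1, hI0]
  constructor
  · rw [hTval, one_div]
    linarith
  · rw [hTval]
    have hfinal : -(a⁻¹ * ‖ξ‖^2) + Bn^2 = -((a - s^2*R^2)/a^2) * ‖ξ‖^2 := by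
      rw [hBn]
      field_simp
      ring
    linarith [hquotle, hfinal.le, hfinal.ge]

end Meas

lemma conv_integral {τ t s a : ℝ} (hτ : 0 < τ) (ht : 0 < t) (hs : 0 ≤ s)
    (ha : a = t + s^2*τ^2) (v : E) :
    ∫ w : EuclideanSpace ℝ (Fin d),
        Real.exp (-‖w‖^2/(2*τ^2)) * Real.exp (-‖v - s•w‖^2/(2*t))
      = (∫ w : EuclideanSpace ℝ (Fin d), Real.exp (-(a/(2*τ^2*t)) * ‖w‖^2))
        * Real.exp (-‖v‖^2/(2*a)) := by
  have hτ2 : (0:ℝ) < τ^2 := by positivity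
  have ha0 : 0 < a := by nlinarith [sq_nonneg (s*τ)]
  have hpt : ∀ w : EuclideanSpace ℝ (Fin d),
      Real.exp (-‖w‖^2/(2*τ^2)) * Real.exp (-‖v - s•w‖^2/(2*t))
      = Real.exp (-‖v‖^2/(2*a)) * Real.exp (-(a/(2*τ^2*t)) * ‖w - (s*τ^2/a)•v‖^2) := by
    intro w
    rw [← Real.exp_add, ← Real.exp_add]
    congr 1
    have e1 : ‖v - s•w‖^2 = ‖v‖^2 - 2*(s*(inner ℝ v w : ℝ)) + s^2*‖w‖^2 := by
      rw [norm_sub_sq_real, real_inner_smul_right, norm_smul, Real.norm_eq_abs,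
        mul_pow, sq_abs]
    have e2 : ‖w - (s*τ^2/a)•v‖^2
        = ‖w‖^2 - 2*((s*τ^2/a)*(inner ℝ v w : ℝ)) + (s*τ^2/a)^2*‖v‖^2 := by
      rw [norm_sub_sq_real, real_inner_smul_right, norm_smul, Real.norm_eq_abs,
        mul_pow, sq_abs, real_inner_comm]
    rw [e1, e2, ha]
    field_simp
    ring
  calc ∫ w : EuclideanSpace ℝ (Fin d),
        Real.exp (-‖w‖^2/(2*τ^2)) * Real.exp (-‖v - s•w‖^2/(2*t))
      = ∫ w : EuclideanSpace ℝ (Fin d), Real.exp (-‖v‖^2/(2*a))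
          * Real.exp (-(a/(2*τ^2*t)) * ‖w - (s*τ^2/a)•v‖^2) :=
        integral_congr_ae (Filter.Eventually.of_forall hpt)
    _ = Real.exp (-‖v‖^2/(2*a))
          * ∫ w : EuclideanSpace ℝ (Fin d), Real.exp (-(a/(2*τ^2*t)) * ‖w - (s*τ^2/a)•v‖^2) :=
        integral_const_mul _ _
    _ = Real.exp (-‖v‖^2/(2*a))
          * ∫ w : EuclideanSpace ℝ (Fin d), Real.exp (-(a/(2*τ^2*t)) * ‖w‖^2) := by
        rw [integral_sub_right_eq_self
          (fun w : EuclideanSpace ℝ (Fin d) => Real.exp (-(a/(2*τ^2*t)) * ‖w‖^2))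
          ((s*τ^2/a)•v)]
    _ = _ := mul_comm _ _

lemma I₀_pos {c : ℝ} (hc : 0 < c) :
    0 < ∫ w : EuclideanSpace ℝ (Fin d), Real.exp (-c * ‖w‖^2) := by
  rw [GaussianFourier.integral_rexp_neg_mul_sq_norm hc]
  positivity

end GCHB



open MeasureTheory

theorem gaussian_convolution_hessian_bounds {d : ℕ}
    (μ : Measure (EuclideanSpace ℝ (Fin d))) [IsProbabilityMeasure μ]
    (R σ τ : ℝ) (hR : 0 ≤ R) (hσ : 0 < σ) (hτ : 0 < τ)
    (hsupp : μ (Metric.closedBall (0 : EuclideanSpace ℝ (Fin d)) R)ᶜ = 0)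
    (l : ℝ) (hl0 : 0 < l) (hl1 : l < 1)
    (α2 : ℝ) (hα2 : α2 = σ ^ 2 * (1 - l) + τ ^ 2 * l)
    (p : EuclideanSpace ℝ (Fin d) → ℝ)
    (hp : ∀ x, p x = ∫ u, (∫ w : EuclideanSpace ℝ (Fin d),
      (2 * Real.pi * τ ^ 2) ^ (-(d : ℝ) / 2) *
        Real.exp (-‖w‖ ^ 2 / (2 * τ ^ 2)) *
      ((2 * Real.pi * (σ ^ 2 * (1 - l))) ^ (-(d : ℝ) / 2) *
        Real.exp (-‖x - Real.sqrt l • (u + w)‖ ^ 2 / (2 * (σ ^ 2 * (1 - l)))))) ∂μ) :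
    ∀ (x ξ : EuclideanSpace ℝ (Fin d)),
      -(1 / α2) * ‖ξ‖ ^ 2
        ≤ iteratedFDeriv ℝ 2 (fun y => Real.log (p y)) x ![ξ, ξ] ∧
      iteratedFDeriv ℝ 2 (fun y => Real.log (p y)) x ![ξ, ξ]
        ≤ -((α2 - l * R ^ 2) / α2 ^ 2) * ‖ξ‖ ^ 2 := by
  intro x ξ
  set s : ℝ := Real.sqrt l with hsdef
  have hs : 0 ≤ s := Real.sqrt_nonneg l
  have hs2 : s ^ 2 = l := Real.sq_sqrt hl0.le
  set t : ℝ := σ ^ 2 * (1 - l) with htdef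
  have ht : 0 < t := by
    have : 0 < 1 - l := by linarith
    positivity
  have haeq : α2 = t + s ^ 2 * τ ^ 2 := by rw [hα2, hs2, htdef]; ring
  have ha0 : 0 < α2 := by
    rw [haeq]; nlinarith [sq_nonneg (s * τ)]
  set c₁ : ℝ := (2 * Real.pi * τ ^ 2) ^ (-(d : ℝ) / 2) with hc₁
  set c₂ : ℝ := (2 * Real.pi * t) ^ (-(d : ℝ) / 2) with hc₂
  set I₀ : ℝ := ∫ w : EuclideanSpace ℝ (Fin d),
      Real.exp (-(α2 / (2 * τ ^ 2 * t)) * ‖w‖ ^ 2) with hI₀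
  have hc₁0 : 0 < c₁ := by
    have h : (0:ℝ) < 2 * Real.pi * τ ^ 2 := by positivity
    exact Real.rpow_pos_of_pos h _
  have hc₂0 : 0 < c₂ := by
    have h : (0:ℝ) < 2 * Real.pi * t := by positivity
    exact Real.rpow_pos_of_pos h _
  have hI₀0 : 0 < I₀ := by
    rw [hI₀]
    exact GCHB.I₀_pos (by positivity)
  set K : ℝ := c₁ * c₂ * I₀ with hK
  have hK0 : 0 < K := by positivity
  have hpq : ∀ y, p y = K * GCHB.q α2 s μ y := by
    intro y
    have hinner : ∀ u : EuclideanSpace ℝ (Fin d),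
        (∫ w : EuclideanSpace ℝ (Fin d),
          c₁ * Real.exp (-‖w‖ ^ 2 / (2 * τ ^ 2)) *
          (c₂ * Real.exp (-‖y - s • (u + w)‖ ^ 2 / (2 * t))))
        = K * GCHB.g α2 s y u := by
      intro u
      have h1 : ∀ w : EuclideanSpace ℝ (Fin d),
          c₁ * Real.exp (-‖w‖ ^ 2 / (2 * τ ^ 2)) *
            (c₂ * Real.exp (-‖y - s • (u + w)‖ ^ 2 / (2 * t)))
          = (c₁ * c₂) * (Real.exp (-‖w‖ ^ 2 / (2 * τ ^ 2)) *
              Real.exp (-‖(y - s • u) - s • w‖ ^ 2 / (2 * t))) := by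
        intro w
        rw [show y - s • (u + w) = (y - s • u) - s • w by
          rw [smul_add, sub_add_eq_sub_sub]]
        ring
      rw [integral_congr_ae (Filter.Eventually.of_forall h1), integral_const_mul,
        GCHB.conv_integral hτ ht hs haeq (y - s • u)]
      rw [GCHB.g, hK, hI₀]
      ring
    rw [hp y]
    rw [integral_congr_ae (Filter.Eventually.of_forall hinner), integral_const_mul,
      GCHB.q]
  have hqp : ∀ y, 0 < GCHB.q α2 s μ y := fun y => GCHB.q_pos ha0 s y
  have hlogeq : (fun y => Real.log (p y))
      = fun y => Real.log K + Real.log (GCHB.q α2 s μ y) := by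
    funext y
    rw [hpq y, Real.log_mul hK0.ne' (hqp y).ne']
  have hiter : iteratedFDeriv ℝ 2 (fun y => Real.log (p y)) x ![ξ, ξ]
      = iteratedFDeriv ℝ 2 (fun y => Real.log (GCHB.q α2 s μ y)) x ![ξ, ξ] := by
    rw [hlogeq, iteratedFDeriv_two_apply, iteratedFDeriv_two_apply]
    have hfd : (fderiv ℝ fun y => Real.log K + Real.log (GCHB.q α2 s μ y))
        = fderiv ℝ fun y => Real.log (GCHB.q α2 s μ y) := by
      funext z
      exact fderiv_const_add _
    rw [hfd]
  obtain ⟨h1, h2⟩ := GCHB.core μ hR ha0 hs hsupp x ξ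
  rw [hs2] at h2
  exact ⟨hiter ▸ h1, hiter ▸ h2⟩
end
end

section
/- Let π, ν be probability densities e^{−U}, e^{−W} on R^d with e^{−U}, e^{−W} bounded, |∇W| ≤ M_W everywhere, and finite second moments. For λ ∈ (0,1) let p be the density of √λX + √(1−λ)Z, X ~ π, Z ~ ν independent. Then |∇ ln p(x)| ≤ M_W/√(1−λ) for all x. If additionally |∇U| ≤ M_U, then |∇ ln p(x)| ≤ min(M_W/√(1−λ), M_U/√λ). -/
open MeasureTheory

section Aux

variable {d : ℕ}

private lemma score_aux_int (U W : EuclideanSpace ℝ (Fin d) → ℝ)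
    (hUc : Continuous U) (hWc : Continuous W)
    (hUint : Integrable (fun y : EuclideanSpace ℝ (Fin d) => Real.exp (-U y)))
    (BW : ℝ) (hWb : ∀ z, Real.exp (-W z) ≤ BW)
    (a b : ℝ) (ha : a ≠ 0) (x : EuclideanSpace ℝ (Fin d)) :
    Integrable (fun y : EuclideanSpace ℝ (Fin d) =>
      Real.exp (-U (a • y) - W (b • (x - y)))) := by
  have h1 : Integrable (fun y : EuclideanSpace ℝ (Fin d) => Real.exp (-U (a • y))) :=
    (integrable_comp_smul_iff volume (fun y => Real.exp (-U y)) ha).2 hUint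
  have hcont : Continuous (fun y : EuclideanSpace ℝ (Fin d) =>
      Real.exp (-U (a • y) - W (b • (x - y)))) := by
    apply Real.continuous_exp.comp
    exact ((hUc.comp (continuous_const_smul a)).neg).sub
      (hWc.comp ((continuous_const.sub continuous_id).const_smul b))
  refine (h1.const_mul BW).mono' hcont.aestronglyMeasurable ?_
  filter_upwards with y
  rw [Real.norm_eq_abs, abs_of_pos (Real.exp_pos _), sub_eq_add_neg, Real.exp_add]
  calc Real.exp (-U (a • y)) * Real.exp (-W (b • (x - y)))
      ≤ Real.exp (-U (a • y)) * BW :=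
        mul_le_mul_of_nonneg_left (hWb _) (Real.exp_pos _).le
    _ = BW * Real.exp (-U (a • y)) := mul_comm _ _

private lemma score_aux_pos (f : EuclideanSpace ℝ (Fin d) → ℝ)
    (hpos : ∀ y, 0 < f y) (hint : Integrable f) : 0 < ∫ y, f y := by
  refine (integral_pos_iff_support_of_nonneg (fun y => (hpos y).le) hint).2 ?_
  have : Function.support f = Set.univ := Set.eq_univ_of_forall fun y => (hpos y).ne'
  rw [this]
  exact isOpen_univ.measure_pos volume Set.univ_nonempty

private lemma score_aux_mono (U W : EuclideanSpace ℝ (Fin d) → ℝ)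
    (hUc : Continuous U) (hWc : Continuous W)
    (hUint : Integrable (fun y : EuclideanSpace ℝ (Fin d) => Real.exp (-U y)))
    (BW : ℝ) (hWb : ∀ z, Real.exp (-W z) ≤ BW)
    (a b : ℝ) (ha : a ≠ 0) (hb : 0 ≤ b)
    (MW : ℝ) (hWlip : ∀ u v, W u - W v ≤ MW * ‖u - v‖)
    (x x' : EuclideanSpace ℝ (Fin d)) :
    (∫ y, Real.exp (-U (a • y) - W (b • (x - y)))) ≤
      Real.exp (MW * b * ‖x - x'‖) *
        ∫ y, Real.exp (-U (a • y) - W (b • (x' - y))) := by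
  rw [← MeasureTheory.integral_const_mul]
  refine integral_mono (score_aux_int U W hUc hWc hUint BW hWb a b ha x)
    ((score_aux_int U W hUc hWc hUint BW hWb a b ha x').const_mul _) fun y => ?_
  rw [← Real.exp_add]
  apply Real.exp_le_exp.2
  have h1 : W (b • (x' - y)) - W (b • (x - y)) ≤ MW * ‖b • (x' - y) - b • (x - y)‖ :=
    hWlip _ _
  have h2 : b • (x' - y) - b • (x - y) = b • (x' - x) := by
    rw [← smul_sub]; congr 1; abel
  rw [h2, norm_smul, Real.norm_eq_abs, abs_of_nonneg hb, norm_sub_rev] at h1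
  have : W (x' - y |> fun z => b • z) = W (b • (x' - y)) := rfl
  nlinarith [h1]

private lemma score_aux_lip (q : EuclideanSpace ℝ (Fin d) → ℝ) (K : ℝ) (hK : 0 ≤ K)
    (hpos : ∀ x, 0 < q x)
    (hratio : ∀ x x', q x ≤ Real.exp (K * ‖x - x'‖) * q x')
    (c : ℝ) (hc : 0 < c) :
    LipschitzWith (Real.toNNReal K) (fun x => Real.log (c * q x)) := by
  refine LipschitzWith.of_dist_le_mul fun x x' => ?_
  have key : ∀ u v : EuclideanSpace ℝ (Fin d),
      Real.log (c * q u) - Real.log (c * q v) ≤ K * ‖u - v‖ := by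
    intro u v
    have h1 : q u ≤ Real.exp (K * ‖u - v‖) * q v := hratio u v
    have h2 : Real.log (q u) ≤ K * ‖u - v‖ + Real.log (q v) := by
      calc Real.log (q u) ≤ Real.log (Real.exp (K * ‖u - v‖) * q v) := by
            apply Real.log_le_log (hpos u) h1
        _ = K * ‖u - v‖ + Real.log (q v) := by
            rw [Real.log_mul (Real.exp_ne_zero _) (hpos v).ne', Real.log_exp]
    rw [Real.log_mul hc.ne' (hpos u).ne', Real.log_mul hc.ne' (hpos v).ne']
    linarith
  rw [Real.dist_eq, Real.coe_toNNReal K hK, dist_eq_norm]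
  rw [abs_sub_le_iff]
  refine ⟨key x x', ?_⟩
  rw [norm_sub_rev]
  exact key x' x

end Aux

theorem score_bound {d : ℕ}
    (U W : EuclideanSpace ℝ (Fin d) → ℝ)
    (hUd : Differentiable ℝ U) (hWd : Differentiable ℝ W)
    (hUdens : ∫ x : EuclideanSpace ℝ (Fin d), Real.exp (-U x) = 1)
    (hWdens : ∫ x : EuclideanSpace ℝ (Fin d), Real.exp (-W x) = 1)
    (hUbdd : ∃ B, ∀ x, Real.exp (-U x) ≤ B)
    (hWbdd : ∃ B, ∀ x, Real.exp (-W x) ≤ B)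
    (hU2 : Integrable (fun x : EuclideanSpace ℝ (Fin d) =>
      ‖x‖ ^ 2 * Real.exp (-U x)))
    (hW2 : Integrable (fun x : EuclideanSpace ℝ (Fin d) =>
      ‖x‖ ^ 2 * Real.exp (-W x)))
    (MW : ℝ) (hMW : ∀ y, ‖gradient W y‖ ≤ MW)
    (l : ℝ) (hl0 : 0 < l) (hl1 : l < 1)
    (p : EuclideanSpace ℝ (Fin d) → ℝ)
    (hp : ∀ x, p x = (l * (1 - l)) ^ (-(d : ℝ) / 2) *
      ∫ y : EuclideanSpace ℝ (Fin d),
        Real.exp (-U ((Real.sqrt l)⁻¹ • y)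
          - W ((Real.sqrt (1 - l))⁻¹ • (x - y)))) :
    (∀ x, ‖gradient (fun y => Real.log (p y)) x‖ ≤ MW / Real.sqrt (1 - l)) ∧
    (∀ MU : ℝ, (∀ y, ‖gradient U y‖ ≤ MU) →
      ∀ x, ‖gradient (fun y => Real.log (p y)) x‖ ≤
        min (MW / Real.sqrt (1 - l)) (MU / Real.sqrt l)) := by
  have hl1' : 0 < 1 - l := by linarith
  set sa : ℝ := Real.sqrt l with hsa
  set sb : ℝ := Real.sqrt (1 - l) with hsb
  have hsa0 : 0 < sa := Real.sqrt_pos.2 hl0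
  have hsb0 : 0 < sb := Real.sqrt_pos.2 hl1'
  set a : ℝ := sa⁻¹ with haa
  set b : ℝ := sb⁻¹ with hbb
  have ha0 : 0 < a := inv_pos.2 hsa0
  have hb0 : 0 < b := inv_pos.2 hsb0
  set c : ℝ := (l * (1 - l)) ^ (-(d : ℝ) / 2) with hc
  have hc0 : 0 < c := Real.rpow_pos_of_pos (mul_pos hl0 hl1') _
  have hUint : Integrable (fun y : EuclideanSpace ℝ (Fin d) => Real.exp (-U y)) :=
    integrable_of_integral_eq_one hUdens
  have hWint : Integrable (fun y : EuclideanSpace ℝ (Fin d) => Real.exp (-W y)) :=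
    integrable_of_integral_eq_one hWdens
  obtain ⟨BU, hBU⟩ := hUbdd
  obtain ⟨BW, hBW⟩ := hWbdd
  -- Lipschitz bounds for W from gradient bound
  have hgradnorm : ∀ (f : EuclideanSpace ℝ (Fin d) → ℝ) (y),
      ‖gradient f y‖ = ‖fderiv ℝ f y‖ := fun f y =>
    (InnerProductSpace.toDual ℝ (EuclideanSpace ℝ (Fin d))).symm.norm_map (fderiv ℝ f y)
  have lip_of_grad : ∀ (V : EuclideanSpace ℝ (Fin d) → ℝ), Differentiable ℝ V →
      ∀ (M : ℝ), (∀ y, ‖gradient V y‖ ≤ M) → ∀ u v, V u - V v ≤ M * ‖u - v‖ := by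
    intro V hVd M hM u v
    have hbound : ∀ y ∈ (Set.univ : Set (EuclideanSpace ℝ (Fin d))),
        ‖fderiv ℝ V y‖ ≤ M := by
      intro y _
      rw [← hgradnorm V y]; exact hM y
    have := Convex.norm_image_sub_le_of_norm_fderiv_le
      (fun y _ => (hVd y).differentiableWithinAt.differentiableAt Filter.univ_mem)
      hbound convex_univ (Set.mem_univ v) (Set.mem_univ u)
    calc V u - V v ≤ ‖V u - V v‖ := le_abs_self _
      _ ≤ M * ‖u - v‖ := this
  have hMWnn : 0 ≤ MW := le_trans (norm_nonneg _) (hMW 0)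
  have hWlip : ∀ u v, W u - W v ≤ MW * ‖u - v‖ := lip_of_grad W hWd MW hMW
  -- the two representations of the integral
  set q : EuclideanSpace ℝ (Fin d) → ℝ :=
    fun x => ∫ y, Real.exp (-U (a • y) - W (b • (x - y))) with hq
  set r : EuclideanSpace ℝ (Fin d) → ℝ :=
    fun x => ∫ y, Real.exp (-W (b • y) - U (a • (x - y))) with hr
  have hqr : ∀ x, q x = r x := by
    intro x
    have := integral_sub_left_eq_self
      (fun y => Real.exp (-U (a • y) - W (b • (x - y)))) volume x
    calc q x = ∫ y, Real.exp (-U (a • y) - W (b • (x - y))) := rfl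
      _ = ∫ y, Real.exp (-U (a • (x - y)) - W (b • (x - (x - y)))) := this.symm
      _ = r x := by
          apply integral_congr_ae
          filter_upwards with y
          rw [sub_sub_cancel]
          ring_nf
  have hqpos : ∀ x, 0 < q x := fun x =>
    score_aux_pos _ (fun y => Real.exp_pos _)
      (score_aux_int U W hUd.continuous hWd.continuous hUint BW hBW a b ha0.ne' x)
  have hrpos : ∀ x, 0 < r x := fun x => hqr x ▸ hqpos x
  have hplog : (fun y => Real.log (p y)) = fun x => Real.log (c * q x) := by
    funext x; rw [hp x]
  have hplog' : (fun y => Real.log (p y)) = fun x => Real.log (c * r x) := by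
    rw [hplog]; funext x; rw [hqr x]
  -- Lipschitz constant K1 = MW * b
  have hlip1 : LipschitzWith (Real.toNNReal (MW * b)) (fun y => Real.log (p y)) := by
    rw [hplog]
    refine score_aux_lip q (MW * b) (mul_nonneg hMWnn hb0.le) hqpos ?_ c hc0
    intro x x'
    exact score_aux_mono U W hUd.continuous hWd.continuous hUint BW hBW a b
      ha0.ne' hb0.le MW hWlip x x'
  have hbound1 : ∀ x, ‖gradient (fun y => Real.log (p y)) x‖ ≤ MW * b := by
    intro x
    rw [hgradnorm]
    have := norm_fderiv_le_of_lipschitz ℝ hlip1 (x₀ := x)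
    rwa [Real.coe_toNNReal _ (mul_nonneg hMWnn hb0.le)] at this
  have hbdiv : MW * b = MW / sb := by rw [hbb, div_eq_mul_inv]
  constructor
  · intro x
    rw [← hbdiv]
    exact hbound1 x
  · intro MU hMU x
    have hMUnn : 0 ≤ MU := le_trans (norm_nonneg _) (hMU 0)
    have hUlip : ∀ u v, U u - U v ≤ MU * ‖u - v‖ := lip_of_grad U hUd MU hMU
    have hlip2 : LipschitzWith (Real.toNNReal (MU * a)) (fun y => Real.log (p y)) := by
      rw [hplog']
      refine score_aux_lip r (MU * a) (mul_nonneg hMUnn ha0.le) hrpos ?_ c hc0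
      intro x x'
      exact score_aux_mono W U hWd.continuous hUd.continuous hWint BU hBU b a
        hb0.ne' ha0.le MU hUlip x x'
    have hbound2 : ‖gradient (fun y => Real.log (p y)) x‖ ≤ MU * a := by
      rw [hgradnorm]
      have := norm_fderiv_le_of_lipschitz ℝ hlip2 (x₀ := x)
      rwa [Real.coe_toNNReal _ (mul_nonneg hMUnn ha0.le)] at this
    refine le_min ?_ ?_
    · rw [← hbdiv]; exact hbound1 x
    · rw [div_eq_mul_inv]; exact hbound2
end
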